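/- arXiv:2408.16839 — 2 statements merged into one kernel-verified Lean document; each statement's English description precedes it below -/
import Mathlib

section
/- If (W,S) is a Coxeter system of type Λ and α is a reduced expression such that the braid graph B(α) has a vertex λ of degree 3 or more, then λ is contained in a 4-cycle of B(α). -/
open scoped Classical

namespace Braid

variable {B : Type*}

/-- A Coxeter matrix is *simply laced* if all of its entries are 1, 2 or 3
(in particular, no entry is `0`, which encodes `m(s,t) = ∞`). -/
def SimplyLaced (M : CoxeterMatrix B) : Prop := ∀ s t : B, 1 ≤ M s t ∧ M s t ≤ 3

/-- The Coxeter graph has an edge between `s` and `t` iff `m(s,t) ≥ 3`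
(where the entry `0` encodes `∞`). -/
def CoxEdge (M : CoxeterMatrix B) (s t : B) : Prop := M s t = 0 ∨ 3 ≤ M s t

/-- A Coxeter matrix is *triangle free* if its Coxeter graph contains no three-cycles. -/
def TriangleFree (M : CoxeterMatrix B) : Prop :=
  ∀ s t u : B, ¬ (CoxEdge M s t ∧ CoxEdge M t u ∧ CoxEdge M s u)

/-- A Coxeter system is of *type Λ* if it is simply laced and triangle free. -/
def TypeLambda (M : CoxeterMatrix B) : Prop := SimplyLaced M ∧ TriangleFree M

/-- `y` is obtained from `x` by replacing the factor `s t s` occupying the (0-based)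
positions `p, p+1, p+2` by `t s t`, where `m(s,t) = 3`. -/
def BraidMoveAt (M : CoxeterMatrix B) (x y : List B) (p : ℕ) : Prop :=
  ∃ s t : B, M s t = 3 ∧
    x = x.take p ++ [s, t, s] ++ x.drop (p + 3) ∧
    y = x.take p ++ [t, s, t] ++ x.drop (p + 3)

/-- `x` and `y` differ by a single braid move (applied to `x`). -/
def BraidMove (M : CoxeterMatrix B) (x y : List B) : Prop := ∃ p, BraidMoveAt M x y p

/-- Two words are *braid equivalent* if one is obtained from the other
by a sequence of braid moves. -/
def BraidEquiv (M : CoxeterMatrix B) : List B → List B → Prop :=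
  Relation.ReflTransGen (BraidMove M)

/-- The braid class of `α`. -/
def braidClass (M : CoxeterMatrix B) (α : List B) : Set (List B) := {x | BraidEquiv M α x}

/-- The braid graph of `α`: vertices are the members of the braid class of `α`, with two
vertices adjacent iff they differ by a single braid move. -/
def braidGraph (M : CoxeterMatrix B) (α : List B) : SimpleGraph (braidClass M α) :=
  SimpleGraph.fromRel (fun x y => BraidMove M x.1 y.1)

/-- `c` is the (1-based) center of a braid shadow of `β`; that is, the interval of 1-based
positions `⟦c-1, c+1⟧` is a braid shadow of `β`. -/
def ShadowCenter (M : CoxeterMatrix B) (β : List B) (c : ℕ) : Prop :=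
  2 ≤ c ∧ ∃ s t : B, M s t = 3 ∧ β = β.take (c - 2) ++ [s, t, s] ++ β.drop (c + 1)

/-- The set of (1-based) centers of the braid shadows of the braid class `[α]`. -/
def classCenters (M : CoxeterMatrix B) (α : List B) : Set ℕ :=
  {c | ∃ β ∈ braidClass M α, ShadowCenter M β c}

/-- The dimension of `α`: the number of braid shadows of `[α]`. -/
noncomputable def braidDim (M : CoxeterMatrix B) (α : List B) : ℕ :=
  (classCenters M α).ncard

/-- The (1-based) center of the `i`-th braid shadow of `[α]`, the braid shadows being
numbered `1, …, braidDim M α` from left to right. -/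
noncomputable def nthCenter (M : CoxeterMatrix B) (α : List B) (i : ℕ) : ℕ :=
  Nat.nth (· ∈ classCenters M α) (i - 1)

/-- The `i`-th entry of the signature of `x ∈ [α]`: the letter of `x` appearing in the
center of the `i`-th braid shadow of `[α]`. -/
noncomputable def sig (M : CoxeterMatrix B) (α x : List B) (i : ℕ) : Option B :=
  x[nthCenter M α i - 1]?

/-- `sigbar M α x i` is the set of members of `[α]` whose signature agrees with that of `x`
in position `i`. -/
noncomputable def sigbar (M : CoxeterMatrix B) (α x : List B) (i : ℕ) :
    Set (braidClass M α) :=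
  {y | sig M α y.1 i = sig M α x i}

/-- `x` and `y` differ by a single braid move occurring in the `j`-th braid shadow
of `[α]` (i.e. the edge `{x,y}` of the braid graph is labeled by `j`). -/
noncomputable def EdgeLabeled (M : CoxeterMatrix B) (α x y : List B) (j : ℕ) : Prop :=
  1 ≤ j ∧ j ≤ braidDim M α ∧
    (BraidMoveAt M x y (nthCenter M α j - 2) ∨ BraidMoveAt M y x (nthCenter M α j - 2))

/-- `x` and `y` differ by a single braid move occurring in the braid shadow with
(1-based) center `c`. -/
def MoveAtCenter (M : CoxeterMatrix B) (x y : List B) (c : ℕ) : Prop :=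
  BraidMoveAt M x y (c - 2) ∨ BraidMoveAt M y x (c - 2)

/-- `BraidSeq M α js x y` : the list `js` of braid-shadow numbers records a braid sequence
transforming `x` into `y`, each move being applied in the indicated braid shadow of `[α]`. -/
noncomputable def BraidSeq (M : CoxeterMatrix B) (α : List B) :
    List ℕ → List B → List B → Prop
  | [], x, y => x = y
  | j :: js, x, y => ∃ z, EdgeLabeled M α x z j ∧ BraidSeq M α js z y

/-- A braid sequence from `x` to `y` is *minimal* if no shorter braid sequence from `x`
to `y` exists. -/
noncomputable def MinimalBraidSeq (M : CoxeterMatrix B) (α : List B)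
    (js : List ℕ) (x y : List B) : Prop :=
  BraidSeq M α js x y ∧ ∀ ls : List ℕ, BraidSeq M α ls x y → js.length ≤ ls.length

/-- `Δ(sig(α), sig(β))`: the number of positions at which the signatures of `α` and `β`
differ. -/
noncomputable def sigDelta (M : CoxeterMatrix B) (α β : List B) : ℕ :=
  {i | 1 ≤ i ∧ i ≤ braidDim M α ∧ sig M α α i ≠ sig M α β i}.ncard

/-- A reduced expression is a *link* if it has length 1, or it has odd length `m` and the
braid shadows of its braid class are exactly `⟦1,3⟧, ⟦3,5⟧, …, ⟦m-2,m⟧`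
(equivalently, the shadow centers are exactly the even numbers `2, 4, …, m-1`). -/
def IsLink (M : CoxeterMatrix B) (α : List B) : Prop :=
  1 ≤ α.length ∧
    (α.length = 1 ∨ (Odd α.length ∧
      classCenters M α = {c | Even c ∧ 2 ≤ c ∧ c + 1 ≤ α.length}))

/-- `maj M α β γ i`: the majority among the `i`-th signature entries of `α`, `β`, `γ`. -/
noncomputable def maj (M : CoxeterMatrix B) (α β γ : List B) (i : ℕ) : Option B :=
  if sig M α α i = sig M α β i ∨ sig M α α i = sig M α γ i then sig M α α i
  else sig M α β i

/-- `sigbarPair M α x y`: the set of members of `[α]` whose signature agrees with the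
common signature entries of `x` and `y`. -/
noncomputable def sigbarPair (M : CoxeterMatrix B) (α x y : List B) :
    Set (braidClass M α) :=
  {z | ∀ i : ℕ, 1 ≤ i → i ≤ braidDim M α →
    sig M α x i = sig M α y i → sig M α z.1 i = sig M α x i}

/-! ### Graph-theoretic notions -/

/-- A set `U` of vertices of a graph is *convex* if every vertex on every geodesic
(shortest path) between two vertices of `U` belongs to `U`. -/
def GraphConvex {V : Type*} (G : SimpleGraph V) (U : Set V) : Prop :=
  ∀ u ∈ U, ∀ v ∈ U, ∀ p : G.Walk u v, p.length = G.dist u v → ∀ x ∈ p.support, x ∈ U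

/-- The interval `I(u,v)`: the set of vertices lying on some geodesic between `u` and `v`. -/
def interval {V : Type*} (G : SimpleGraph V) (u v : V) : Set V :=
  {x | ∃ p : G.Walk u v, p.length = G.dist u v ∧ x ∈ p.support}

/-- A connected graph is *median* if any three vertices admit a unique median. -/
def IsMedianGraph {V : Type*} (G : SimpleGraph V) : Prop :=
  G.Connected ∧ ∀ u v w : V,
    ∃! x, x ∈ interval G u v ∩ interval G u w ∩ interval G v w

/-- The hypercube of dimension `n`: vertices are binary strings of length `n`, adjacent
iff they differ in exactly one digit. -/
def hypercube (n : ℕ) : SimpleGraph (Fin n → Bool) :=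
  SimpleGraph.fromRel (fun x y => ∃! i, x i ≠ y i)

/-- A graph is a *partial cube* if it admits an isometric embedding into some hypercube. -/
def IsPartialCube {V : Type*} (G : SimpleGraph V) : Prop :=
  ∃ (n : ℕ) (f : V → Fin n → Bool),
    ∀ u v : V, (hypercube n).dist (f u) (f v) = G.dist u v

/-- The isometric dimension of a graph: the minimal dimension of a hypercube into which it
isometrically embeds. -/
noncomputable def isoDim {V : Type*} (G : SimpleGraph V) : ℕ :=
  sInf {n | ∃ f : V → Fin n → Bool,
    ∀ u v : V, (hypercube n).dist (f u) (f v) = G.dist u v}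

/-- The semicube `W_{uv}` : the set of vertices strictly closer to `u` than to `v`. -/
def semicube {V : Type*} (G : SimpleGraph V) (u v : V) : Set V :=
  {w | G.dist w u < G.dist w v}

section Helper
variable {B : Type*} {M : CoxeterMatrix B}

lemma braidMoveAt_of_decomp {s t : B} (h3 : M s t = 3) (A C : List B) :
    BraidMoveAt M (A ++ [s, t, s] ++ C) (A ++ [t, s, t] ++ C) A.length := by
  have ht : (A ++ [s, t, s] ++ C).take A.length = A := by
    rw [List.append_assoc]; exact List.take_left' rfl
  have hd : (A ++ [s, t, s] ++ C).drop (A.length + 3) = C :=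
    List.drop_left' (by simp)
  exact ⟨s, t, h3, by rw [ht, hd], by rw [ht, hd]⟩

lemma braidMoveAt_decomp {x y : List B} {p : ℕ} (h : BraidMoveAt M x y p) :
    ∃ (s t : B) (A C : List B), M s t = 3 ∧ A.length = p ∧
      x = A ++ [s, t, s] ++ C ∧ y = A ++ [t, s, t] ++ C := by
  obtain ⟨s, t, h3, hx, hy⟩ := h
  have hlen : p + 3 ≤ x.length := by
    have h' := congrArg List.length hx
    simp [List.length_take, List.length_drop] at h'
    omega
  refine ⟨s, t, x.take p, x.drop (p + 3), h3, ?_, hx, hy⟩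
  simp [List.length_take]; omega

lemma BraidMoveAt.symm' {x y : List B} {p : ℕ} (h : BraidMoveAt M x y p) :
    BraidMoveAt M y x p := by
  obtain ⟨s, t, A, C, h3, hA, hx, hy⟩ := braidMoveAt_decomp h
  have h3' : M t s = 3 := by rw [M.symmetric]; exact h3
  subst hx hy hA
  exact braidMoveAt_of_decomp h3' A C

lemma braidMoveAt_right_unique {x y z : List B} {p : ℕ}
    (hy : BraidMoveAt M x y p) (hz : BraidMoveAt M x z p) : y = z := by
  obtain ⟨s, t, A, C, _, hA, hx, hy⟩ := braidMoveAt_decomp hy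
  obtain ⟨s', t', A', C', _, hA', hx', hz⟩ := braidMoveAt_decomp hz
  rw [hx] at hx'
  obtain ⟨h1, h2⟩ := List.append_inj hx' (by simp [hA, hA'])
  obtain ⟨hAA, hsts⟩ := List.append_inj h1 (by rw [hA, hA'])
  simp at hsts
  rw [hy, hz, hAA, hsts.1, hsts.2.1, h2]

end Helper

section Helper2
variable {B : Type*} {M : CoxeterMatrix B}

lemma braid_rel {W : Type*} [Group W] {a b : W} (ha : a * a = 1) (hb : b * b = 1)
    (h : (a * b) ^ 3 = 1) : a * b * a = b * a * b := by
  have h' : a * (b * (a * (b * (a * b)))) = 1 := by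
    simpa [pow_succ, mul_assoc] using h
  have h1 : (a * b * a) * (b * a * b) = 1 := by simpa [mul_assoc] using h'
  have h2 : (b * a * b) * (b * a * b) = 1 := by
    have e1 : (b * a * b) * (b * a * b) = b * (a * (b * b * (a * b))) := by
      simp [mul_assoc]
    rw [e1, hb, one_mul, show a * (a * b) = a * a * b from (mul_assoc a a b).symm,
      ha, one_mul, hb]
  rw [eq_inv_of_mul_eq_one_left h1, inv_eq_of_mul_eq_one_right h2]

lemma braidMove_preserves {W : Type*} [Group W] (cs : CoxeterSystem M W) {x y : List B}
    (h : BraidMove M x y) : cs.wordProd x = cs.wordProd y ∧ x.length = y.length := by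
  obtain ⟨p, h⟩ := h
  obtain ⟨s, t, A, C, h3, hA, hx, hy⟩ := braidMoveAt_decomp h
  subst hx hy
  have hb : cs.simple s * cs.simple t * cs.simple s
      = cs.simple t * cs.simple s * cs.simple t :=
    braid_rel (cs.simple_mul_simple_self s) (cs.simple_mul_simple_self t)
      (by rw [← h3]; exact cs.simple_mul_simple_pow s t)
  constructor
  · simp only [cs.wordProd_append]
    have e1 : cs.wordProd [s, t, s] = cs.wordProd [t, s, t] := by
      simp only [CoxeterSystem.wordProd_cons, CoxeterSystem.wordProd_nil, mul_one,
        ← mul_assoc]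
      exact hb
    rw [e1]
  · simp

lemma braidEquiv_preserves {W : Type*} [Group W] (cs : CoxeterSystem M W) {x y : List B}
    (h : BraidEquiv M x y) : cs.wordProd x = cs.wordProd y ∧ x.length = y.length := by
  induction h with
  | refl => exact ⟨rfl, rfl⟩
  | tail _ hmv ih =>
      obtain ⟨e1, e2⟩ := braidMove_preserves cs hmv
      exact ⟨ih.1.trans e1, ih.2.trans e2⟩

lemma braidEquiv_isReduced {W : Type*} [Group W] (cs : CoxeterSystem M W) {x y : List B}
    (h : BraidEquiv M x y) (hx : cs.IsReduced x) : cs.IsReduced y := by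
  obtain ⟨e1, e2⟩ := braidEquiv_preserves cs h
  unfold CoxeterSystem.IsReduced at *
  rw [← e1, ← e2]; exact hx

lemma no_adjacent_moves {W : Type*} [Group W] (cs : CoxeterSystem M W) {l x y : List B}
    {p : ℕ} (hred : cs.IsReduced l)
    (hx : BraidMoveAt M l x p) (hy : BraidMoveAt M l y (p + 1)) : False := by
  obtain ⟨s, t, A, C, h3, hA, hl, -⟩ := braidMoveAt_decomp hx
  obtain ⟨u, v, A', C', h3', hA', hl', -⟩ := braidMoveAt_decomp hy
  have heq : (A ++ [s]) ++ (t :: s :: C) = A' ++ (u :: v :: u :: C') := by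
    have := hl.symm.trans hl'
    simpa [List.append_assoc] using this
  obtain ⟨h1, h2⟩ := List.append_inj heq (by simp [hA, hA'])
  obtain ⟨rfl, rfl, hC⟩ : t = u ∧ s = v ∧ C = u :: C' := by
    injection h2 with e1 h2'; injection h2' with e2 h2''
    exact ⟨e1, e2, h2''⟩
  -- now l = A ++ [s,t,s,t] ++ C'
  have hinf : l.drop A.length = [s, t, s, t] ++ C' := by
    rw [hl, hC, List.append_assoc, List.drop_left]
    simp
  have hred4 : cs.IsReduced [s, t, s, t] := by
    have := CoxeterSystem.IsReduced.take (CoxeterSystem.IsReduced.drop hred A.length) 4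
    rwa [hinf, show ([s, t, s, t] ++ C').take 4 = [s, t, s, t] by simp] at this
  have hπ : cs.wordProd [s, t, s, t]
      = cs.simple s * cs.simple t * cs.simple s * cs.simple t := by
    simp only [CoxeterSystem.wordProd_cons, CoxeterSystem.wordProd_nil, mul_one, ← mul_assoc]
  have hb : cs.simple s * cs.simple t * cs.simple s
      = cs.simple t * cs.simple s * cs.simple t :=
    braid_rel (cs.simple_mul_simple_self s) (cs.simple_mul_simple_self t)
      (by rw [← h3]; exact cs.simple_mul_simple_pow s t)
  have e : cs.wordProd [s, t, s, t] = cs.simple t * cs.simple s := by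
    rw [hπ, hb, mul_assoc, cs.simple_mul_simple_self t, mul_one]
  have hle : cs.length (cs.wordProd [s, t, s, t]) ≤ 2 := by
    rw [e, show cs.simple t * cs.simple s = cs.wordProd [t, s] by
      simp [CoxeterSystem.wordProd_cons, CoxeterSystem.wordProd_nil]]
    exact cs.length_wordProd_le [t, s]
  have : cs.length (cs.wordProd [s, t, s, t]) = 4 := hred4
  omega

end Helper2

section Helper3
variable {B : Type*} {M : CoxeterMatrix B}

lemma getElem?_mid (A C : List B) (a b c : B) :
    (A ++ [a, b, c] ++ C)[A.length]? = some a := by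
  rw [List.append_assoc, List.getElem?_append_right le_rfl]
  simp

lemma ne_of_getElem?_ne {x y : List B} {n : ℕ} {a b : B}
    (hx : x[n]? = some a) (hy : y[n]? = some b) (hab : a ≠ b) : x ≠ y := by
  intro h
  rw [h, hy] at hx
  exact hab (Option.some_injective _ hx.symm)

lemma ne_of_simple {s t : B} (h3 : M s t = 3) : s ≠ t := by
  rintro rfl
  rw [M.diagonal] at h3
  omega

lemma commute_far_moves {l x y : List B} {p q : ℕ}
    (hp : BraidMoveAt M l x p) (hq : BraidMoveAt M l y q) (hpq : p + 3 ≤ q) :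
    ∃ z : List B, BraidMoveAt M x z q ∧ BraidMoveAt M y z p ∧
      x ≠ l ∧ y ≠ l ∧ x ≠ y ∧ z ≠ l ∧ z ≠ x ∧ z ≠ y := by
  obtain ⟨s, t, A, C, h3, hA, hl, hx⟩ := braidMoveAt_decomp hp
  obtain ⟨u, v, A', C', h3', hA', hl', hy⟩ := braidMoveAt_decomp hq
  have hst : s ≠ t := ne_of_simple h3
  have huv : u ≠ v := ne_of_simple h3'
  have heq : (A ++ [s, t, s]) ++ C = A' ++ ([u, v, u] ++ C') := by
    rw [← List.append_assoc, ← hl', ← hl]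
  set D := A'.drop (p + 3) with hD
  have hA'' : A' = (A ++ [s, t, s]) ++ D := by
    have h := congrArg (List.take (p + 3)) heq
    rw [List.take_left' (by simp [hA]),
      List.take_append_of_le_length (by omega)] at h
    rw [hD, h, List.take_append_drop]
  have hC : C = D ++ ([u, v, u] ++ C') := by
    have heq2 : (A ++ [s, t, s]) ++ C = (A ++ [s, t, s]) ++ (D ++ ([u, v, u] ++ C')) := by
      rw [heq, hA'']
      simp [List.append_assoc]
    exact List.append_cancel_left heq2
  set E := A ++ [t, s, t] ++ D with hE
  have hElen : E.length = q := by
    have := congrArg List.length hA''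
    simp only [List.length_append, List.length_cons, List.length_nil] at this ⊢
    simp only [hE, List.length_append, List.length_cons, List.length_nil]
    omega
  have hx' : x = E ++ [u, v, u] ++ C' := by
    rw [hx, hC, hE]
    simp [List.append_assoc]
  have hy' : y = A ++ [s, t, s] ++ (D ++ [v, u, v] ++ C') := by
    rw [hy, hA'']
    simp [List.append_assoc]
  refine ⟨E ++ [v, u, v] ++ C', ?_, ?_, ?_, ?_, ?_, ?_, ?_, ?_⟩
  · rw [hx', ← hElen]
    exact braidMoveAt_of_decomp h3' _ _
  · have hz' : E ++ [v, u, v] ++ C' = A ++ [t, s, t] ++ (D ++ [v, u, v] ++ C') := by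
      rw [hE]; simp [List.append_assoc]
    rw [hy', hz', ← hA]
    exact braidMoveAt_of_decomp h3 _ _
  · exact ne_of_getElem?_ne (by rw [hx]; exact getElem?_mid ..)
      (by rw [hl]; exact getElem?_mid ..) hst.symm
  · exact ne_of_getElem?_ne (by rw [hy]; exact getElem?_mid ..)
      (by rw [hl']; exact getElem?_mid ..) huv.symm
  · exact ne_of_getElem?_ne (by rw [hx]; exact getElem?_mid ..)
      (by rw [hy']; exact getElem?_mid ..) hst.symm
  · have hz' : E ++ [v, u, v] ++ C' = A ++ [t, s, t] ++ (D ++ [v, u, v] ++ C') := by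
      rw [hE]; simp [List.append_assoc]
    exact ne_of_getElem?_ne (by rw [hz']; exact getElem?_mid ..)
      (by rw [hl]; exact getElem?_mid ..) hst.symm
  · refine ne_of_getElem?_ne (n := E.length) (getElem?_mid ..)
      (by rw [hx']; exact getElem?_mid ..) huv.symm
  · have hz' : E ++ [v, u, v] ++ C' = A ++ [t, s, t] ++ (D ++ [v, u, v] ++ C') := by
      rw [hE]; simp [List.append_assoc]
    exact ne_of_getElem?_ne (by rw [hz']; exact getElem?_mid ..)
      (by rw [hy']; exact getElem?_mid ..) hst.symm

end Helper3

section Helper4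
variable {B W : Type*} [Group W] {M : CoxeterMatrix B} {α : List B}

lemma adj_to_move {lam x : braidClass M α} (h : (braidGraph M α).Adj lam x) :
    ∃ p, BraidMoveAt M lam.1 x.1 p := by
  simp only [braidGraph, SimpleGraph.fromRel_adj] at h
  rcases h.2 with ⟨p, hm⟩ | ⟨p, hm⟩
  · exact ⟨p, hm⟩
  · exact ⟨p, hm.symm'⟩

lemma four_cycle_of_far_moves (lam xa xb : braidClass M α) {p q : ℕ}
    (ha : (braidGraph M α).Adj lam xa) (hb : (braidGraph M α).Adj lam xb)
    (hp : BraidMoveAt M lam.1 xa.1 p) (hq : BraidMoveAt M lam.1 xb.1 q)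
    (hpq : p + 3 ≤ q) :
    ∃ u v w : braidClass M α,
      (braidGraph M α).Adj lam u ∧ (braidGraph M α).Adj u v ∧
      (braidGraph M α).Adj v w ∧ (braidGraph M α).Adj w lam ∧
      lam ≠ v ∧ u ≠ w := by
  obtain ⟨z, hxz, hyz, hxl, hyl, hxy, hzl, hzx, hzy⟩ := commute_far_moves hp hq hpq
  have hz : z ∈ braidClass M α :=
    Relation.ReflTransGen.tail (Relation.ReflTransGen.tail lam.2 ⟨p, hp⟩) ⟨q, hxz⟩
  refine ⟨xa, ⟨z, hz⟩, xb, ha, ?_, ?_, hb.symm, ?_, ?_⟩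
  · simp only [braidGraph, SimpleGraph.fromRel_adj]
    exact ⟨fun h => hzx (congrArg Subtype.val h).symm, Or.inl ⟨q, hxz⟩⟩
  · simp only [braidGraph, SimpleGraph.fromRel_adj]
    exact ⟨fun h => hzy (congrArg Subtype.val h), Or.inr ⟨p, hyz⟩⟩
  · exact fun h => hzl (congrArg Subtype.val h).symm
  · exact fun h => hxy (congrArg Subtype.val h)

end Helper4

theorem degree_three_vertex_in_four_cycle
    {B W : Type*} [Group W] (M : CoxeterMatrix B) (cs : CoxeterSystem M W)
    (hM : TypeLambda M) (α : List B) (hα : cs.IsReduced α)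
    (lam x₁ x₂ x₃ : braidClass M α)
    (h12 : x₁ ≠ x₂) (h13 : x₁ ≠ x₃) (h23 : x₂ ≠ x₃)
    (h1 : (braidGraph M α).Adj lam x₁) (h2 : (braidGraph M α).Adj lam x₂)
    (h3 : (braidGraph M α).Adj lam x₃) :
    ∃ u v w : braidClass M α,
      (braidGraph M α).Adj lam u ∧ (braidGraph M α).Adj u v ∧
      (braidGraph M α).Adj v w ∧ (braidGraph M α).Adj w lam ∧
      lam ≠ v ∧ u ≠ w := by
  obtain ⟨p₁, hm1⟩ := adj_to_move h1
  obtain ⟨p₂, hm2⟩ := adj_to_move h2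
  obtain ⟨p₃, hm3⟩ := adj_to_move h3
  have hred : cs.IsReduced lam.1 := braidEquiv_isReduced cs lam.2 hα
  have d12 : p₁ ≠ p₂ := fun h => h12 (Subtype.ext (braidMoveAt_right_unique hm1 (h ▸ hm2)))
  have d13 : p₁ ≠ p₃ := fun h => h13 (Subtype.ext (braidMoveAt_right_unique hm1 (h ▸ hm3)))
  have d23 : p₂ ≠ p₃ := fun h => h23 (Subtype.ext (braidMoveAt_right_unique hm2 (h ▸ hm3)))
  have n12 : p₂ ≠ p₁ + 1 := fun h => no_adjacent_moves cs hred hm1 (h ▸ hm2)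
  have n21 : p₁ ≠ p₂ + 1 := fun h => no_adjacent_moves cs hred hm2 (h ▸ hm1)
  have n13 : p₃ ≠ p₁ + 1 := fun h => no_adjacent_moves cs hred hm1 (h ▸ hm3)
  have n31 : p₁ ≠ p₃ + 1 := fun h => no_adjacent_moves cs hred hm3 (h ▸ hm1)
  have n23 : p₃ ≠ p₂ + 1 := fun h => no_adjacent_moves cs hred hm2 (h ▸ hm3)
  have n32 : p₂ ≠ p₃ + 1 := fun h => no_adjacent_moves cs hred hm3 (h ▸ hm2)
  have hcases : p₁ + 3 ≤ p₂ ∨ p₂ + 3 ≤ p₁ ∨ p₁ + 3 ≤ p₃ ∨ p₃ + 3 ≤ p₁ ∨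
      p₂ + 3 ≤ p₃ ∨ p₃ + 3 ≤ p₂ := by omega
  rcases hcases with h | h | h | h | h | h
  · exact four_cycle_of_far_moves lam x₁ x₂ h1 h2 hm1 hm2 h
  · exact four_cycle_of_far_moves lam x₂ x₁ h2 h1 hm2 hm1 h
  · exact four_cycle_of_far_moves lam x₁ x₃ h1 h3 hm1 hm3 h
  · exact four_cycle_of_far_moves lam x₃ x₁ h3 h1 hm3 hm1 h
  · exact four_cycle_of_far_moves lam x₂ x₃ h2 h3 hm2 hm3 h
  · exact four_cycle_of_far_moves lam x₃ x₂ h3 h2 hm3 hm2 h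


end Braid
end

section
/- If (W,S) is a Coxeter system of type Λ and α, β, γ are braid equivalent reduced expressions, then sigbar(α,β) ∩ sigbar(β,γ) ∩ sigbar(γ,α) = {x ∈ [α] : sig(x) = maj(α,β,γ)}. -/
open scoped Classical

namespace Braid

variable {B : Type*}

/-! ### Auxiliary development for the main theorem -/

section TwoLetterDevelopment

variable {W : Type*} [Group W]

structure Pat (M : CoxeterMatrix B) (z : List B) (p : ℕ) (x q : B) : Prop where
  h3 : M x q = 3
  s0 : z[p]? = some x
  s1 : z[p+1]? = some q
  s2 : z[p+2]? = some x

structure Mv (M : CoxeterMatrix B) (z z' : List B) (p : ℕ) (x q : B) : Prop where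
  h3 : M x q = 3
  len : z'.length = z.length
  s0 : z[p]? = some x
  s1 : z[p+1]? = some q
  s2 : z[p+2]? = some x
  t0 : z'[p]? = some q
  t1 : z'[p+1]? = some x
  t2 : z'[p+2]? = some q
  out : ∀ i, i ≠ p → i ≠ p+1 → i ≠ p+2 → z'[i]? = z[i]?

variable (M : CoxeterMatrix B) (cs : CoxeterSystem M W)

lemma ne_of_M3 {x q : B} (h : M x q = 3) : x ≠ q := by
  rintro rfl; rw [M.diagonal] at h; omega

lemma Mv.pat {M : CoxeterMatrix B} {z z' : List B} {p x q} (h : Mv M z z' p x q) :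
    Pat M z p x q := ⟨h.h3, h.s0, h.s1, h.s2⟩

lemma Mv.pat' {M : CoxeterMatrix B} {z z' : List B} {p x q} (h : Mv M z z' p x q) :
    Pat M z' p q x := ⟨(M.symmetric x q) ▸ h.h3, h.t0, h.t1, h.t2⟩

lemma Mv.symm {M : CoxeterMatrix B} {z z' : List B} {p x q} (h : Mv M z z' p x q) :
    Mv M z' z p q x :=
  ⟨(M.symmetric x q) ▸ h.h3, h.len.symm, h.t0, h.t1, h.t2, h.s0, h.s1, h.s2,
    fun i h1 h2 h3 => (h.out i h1 h2 h3).symm⟩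

lemma Pat.bound {M : CoxeterMatrix B} {z : List B} {p x q} (h : Pat M z p x q) :
    p + 3 ≤ z.length := by
  obtain ⟨h2, -⟩ := List.getElem?_eq_some_iff.1 h.s2
  omega

lemma Mv.bound {M : CoxeterMatrix B} {z z' : List B} {p x q} (h : Mv M z z' p x q) :
    p + 3 ≤ z.length := h.pat.bound

/-- getElem? of a splice. -/
lemma splice_getElem? (z u : List B) (p : ℕ)
    (hp : p + u.length ≤ z.length) (i : ℕ) :
    (z.take p ++ u ++ z.drop (p + u.length))[i]? =
      if i < p then z[i]? else if i < p + u.length then u[i - p]? else z[i]? := by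
  have hlt : (z.take p).length = p := by
    rw [List.length_take]; omega
  by_cases h1 : i < p
  · rw [List.getElem?_append_left, List.getElem?_append_left, List.getElem?_take_of_lt h1]
    · simp [h1]
    · omega
    · rw [List.length_append, hlt]; omega
  · by_cases h2 : i < p + u.length
    · rw [List.getElem?_append_left, List.getElem?_append_right (by omega), hlt]
      · simp [h1, h2]
      · rw [List.length_append, hlt]; omega
    · rw [List.getElem?_append_right, List.getElem?_drop]
      · have he : (z.take p ++ u).length = p + u.length := by rw [List.length_append, hlt]
        rw [he]
        have he2 : p + u.length + (i - (p + u.length)) = i := by omega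
        rw [he2]; simp [h1, h2]
      · rw [List.length_append, hlt]; omega

lemma splice_length (z u : List B) (p : ℕ)
    (hp : p + u.length ≤ z.length) :
    (z.take p ++ u ++ z.drop (p + u.length)).length = z.length := by
  simp only [List.length_append, List.length_take, List.length_drop]
  omega

lemma bound_of_selfsplice {z : List B} {p : ℕ} (u : List B)
    (h : z = z.take p ++ u ++ z.drop (p + u.length)) (hul : 1 ≤ u.length) :
    p + u.length ≤ z.length := by
  have hl := congrArg List.length h
  simp only [List.length_append, List.length_take, List.length_drop] at hl
  omega

lemma selfsplice_getElem? {z : List B} {p : ℕ} (u : List B) (hul : 1 ≤ u.length)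
    (h : z = z.take p ++ u ++ z.drop (p + u.length)) {i : ℕ} (hi : i < u.length) :
    z[p+i]? = u[i]? := by
  have hb := bound_of_selfsplice u h hul
  conv_lhs => rw [h]
  rw [splice_getElem? z u p hb]
  have h1 : ¬ (p + i < p) := by omega
  have h2 : p + i < p + u.length := by omega
  simp only [h1, if_false, h2, if_true]
  congr 1; omega

lemma selfsplice_of_getElem? {z : List B} {p : ℕ} (u : List B)
    (hb : p + u.length ≤ z.length) (h : ∀ i, i < u.length → z[p+i]? = u[i]?) :
    z = z.take p ++ u ++ z.drop (p + u.length) := by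
  apply List.ext_getElem?
  intro i
  rw [splice_getElem? z u p hb]
  by_cases h1 : i < p
  · simp [h1]
  · by_cases h2 : i < p + u.length
    · simp only [h1, if_false, h2, if_true]
      have hip : i = p + (i - p) := by omega
      conv_lhs => rw [hip]
      exact h (i-p) (by omega)
    · simp [h1, h2]

lemma Mv.eq_splice {M : CoxeterMatrix B} {z z' : List B} {p x q} (h : Mv M z z' p x q) :
    z = z.take p ++ [x, q, x] ++ z.drop (p + 3) := by
  have := selfsplice_of_getElem? (z := z) (p := p) [x,q,x] (by simpa using h.bound) ?_
  · simpa using this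
  · intro i hi
    simp only [List.length_cons, List.length_nil] at hi
    interval_cases i
    · simpa using h.s0
    · simpa using h.s1
    · simpa using h.s2

lemma Mv.eq_splice' {M : CoxeterMatrix B} {z z' : List B} {p x q} (h : Mv M z z' p x q) :
    z' = z.take p ++ [q, x, q] ++ z.drop (p + 3) := by
  have hb : p + ([q,x,q] : List B).length ≤ z.length := by simpa using h.bound
  have : z' = z.take p ++ [q,x,q] ++ z.drop (p + ([q,x,q] : List B).length) := by
    apply List.ext_getElem?
    intro i
    rw [splice_getElem? z [q,x,q] p hb]
    by_cases h1 : i < p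
    · simp only [h1, if_true]; exact h.out i (by omega) (by omega) (by omega)
    · by_cases h2 : i < p + ([q,x,q] : List B).length
      · simp only [h1, if_false, h2, if_true]
        simp only [List.length_cons, List.length_nil] at h2
        have : i = p ∨ i = p+1 ∨ i = p+2 := by omega
        rcases this with rfl | rfl | rfl
        · simpa using h.t0
        · have he : p + 1 - p = 1 := by omega
          rw [he]; simpa using h.t1
        · have he : p + 2 - p = 2 := by omega
          rw [he]; simpa using h.t2
      · simp only [h1, if_false, h2, if_false]
        simp only [List.length_cons, List.length_nil] at h2
        exact h.out i (by omega) (by omega) (by omega)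
  simpa using this

lemma mv_iff_braidMoveAt {z z' : List B} {p : ℕ} :
    BraidMoveAt M z z' p ↔ ∃ x q, Mv M z z' p x q := by
  constructor
  · rintro ⟨s, t, h3, hz, hz'⟩
    have hb : p + 3 ≤ z.length := by
      have := bound_of_selfsplice (z := z) (p := p) [s,t,s] (by simpa using hz) (by simp)
      simpa using this
    have hlen : z'.length = z.length := by
      rw [hz']
      have := splice_length z [t,s,t] p (by simpa using hb)
      simpa using this
    have hzi : ∀ i, i < 3 → z[p+i]? = [s,t,s][i]? := by
      intro i hi
      exact selfsplice_getElem? (z := z) (p := p) [s,t,s] (by simp) (by simpa using hz)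
        (by simpa using hi)
    have hz'i : ∀ i, z'[i]? = if i < p then z[i]? else if i < p + 3 then [t,s,t][i-p]? else z[i]? := by
      intro i
      rw [hz']
      have := splice_getElem? z [t,s,t] p (by simpa using hb) i
      simpa using this
    refine ⟨s, t, h3, hlen, ?_, ?_, ?_, ?_, ?_, ?_, ?_⟩
    · simpa using hzi 0 (by omega)
    · simpa using hzi 1 (by omega)
    · simpa using hzi 2 (by omega)
    · rw [hz'i p]; simp
    · rw [hz'i (p+1)]
      have h1 : ¬ (p + 1 < p) := by omega
      simp only [h1, if_false, show p+1 < p+3 by omega, if_true]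
      simp
    · rw [hz'i (p+2)]
      have h1 : ¬ (p + 2 < p) := by omega
      simp only [h1, if_false, show p+2 < p+3 by omega, if_true]
      simp
    · intro i h1 h2 h3'
      rw [hz'i i]
      by_cases hlt : i < p
      · simp [hlt]
      · have : ¬ (i < p + 3) := by omega
        simp [hlt, this]
  · rintro ⟨x, q, h⟩
    exact ⟨x, q, h.h3, by simpa using h.eq_splice, by simpa using h.eq_splice'⟩

lemma mv_iff_braidMove {z z' : List B} :
    BraidMove M z z' ↔ ∃ p x q, Mv M z z' p x q := by
  constructor
  · rintro ⟨p, h⟩; exact ⟨p, (mv_iff_braidMoveAt M).1 h⟩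
  · rintro ⟨p, x, q, h⟩; exact ⟨p, (mv_iff_braidMoveAt M).2 ⟨x, q, h⟩⟩

/-! ### Group-theoretic facts -/

lemma braid_rel_s17 {x q : B} (h : M x q = 3) :
    cs.simple x * cs.simple q * cs.simple x = cs.simple q * cs.simple x * cs.simple q := by
  have h3 : (cs.simple x * cs.simple q) ^ 3 = 1 := by
    rw [← h]; exact cs.simple_mul_simple_pow x q
  rw [pow_succ, pow_succ, pow_one] at h3
  have key : (cs.simple x * cs.simple q * cs.simple x) * (cs.simple q * cs.simple x * cs.simple q) = 1 := by
    have expand : (cs.simple x * cs.simple q * cs.simple x) * (cs.simple q * cs.simple x * cs.simple q)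
        = cs.simple x * cs.simple q * (cs.simple x * cs.simple q) * (cs.simple x * cs.simple q) := by
      group
    rw [expand]; exact h3
  have hinv : (cs.simple q * cs.simple x * cs.simple q)⁻¹ = cs.simple q * cs.simple x * cs.simple q := by
    rw [mul_inv_rev, mul_inv_rev, cs.inv_simple, cs.inv_simple, ← mul_assoc]
  rw [eq_inv_of_mul_eq_one_left key]
  exact hinv

lemma wordProd_sts {x q : B} (h : M x q = 3) :
    cs.wordProd [x, q, x] = cs.wordProd [q, x, q] := by
  simp only [CoxeterSystem.wordProd_cons, CoxeterSystem.wordProd_nil, mul_one, ← mul_assoc]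
  exact braid_rel_s17 M cs h

lemma Mv.wordProd_eq {z z' : List B} {p x q} (h : Mv M z z' p x q) :
    cs.wordProd z' = cs.wordProd z := by
  conv_lhs => rw [h.eq_splice']
  conv_rhs => rw [h.eq_splice]
  simp only [CoxeterSystem.wordProd_append]
  rw [wordProd_sts M cs h.h3]

lemma Mv.isReduced_iff {z z' : List B} {p x q} (h : Mv M z z' p x q) :
    (cs.IsReduced z' ↔ cs.IsReduced z) := by
  unfold CoxeterSystem.IsReduced
  rw [h.wordProd_eq M cs, h.len]

/-- a word with a 4-letter factor `x q x q` (with m(x,q)=3) is not reduced. -/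
lemma not_reduced_xqxq {z : List B} {i : ℕ} {x q : B} (h3 : M x q = 3)
    (h0 : z[i]? = some x) (h1 : z[i+1]? = some q) (h2 : z[i+2]? = some x)
    (h4 : z[i+3]? = some q) : ¬ cs.IsReduced z := by
  intro hred
  have hb : i + ([x,q,x,q] : List B).length ≤ z.length := by
    obtain ⟨hlen, -⟩ := List.getElem?_eq_some_iff.1 h4
    simp only [List.length_cons, List.length_nil]
    omega
  have hsp : z = z.take i ++ [x,q,x,q] ++ z.drop (i + ([x,q,x,q] : List B).length) := by
    apply selfsplice_of_getElem? [x,q,x,q] hb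
    intro j hj
    simp only [List.length_cons, List.length_nil] at hj
    interval_cases j
    · simpa using h0
    · simpa using h1
    · simpa using h2
    · simpa using h4
  -- product of the factor equals product of [q,x], shorter
  have hprod : cs.wordProd [x,q,x,q] = cs.wordProd [q,x] := by
    have hrel := braid_rel_s17 M cs h3
    simp only [CoxeterSystem.wordProd_cons, CoxeterSystem.wordProd_nil, mul_one, ← mul_assoc]
    calc cs.simple x * cs.simple q * cs.simple x * cs.simple q
        = (cs.simple q * cs.simple x * cs.simple q) * cs.simple q := by rw [hrel]
      _ = cs.simple q * cs.simple x := by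
          rw [mul_assoc, cs.simple_mul_simple_self]; group
  have hlong : cs.length (cs.wordProd z) ≤ z.length - 2 := by
    conv_lhs => rw [hsp]
    have : cs.wordProd (z.take i ++ [x,q,x,q] ++ z.drop (i + ([x,q,x,q] : List B).length))
        = cs.wordProd (z.take i ++ [q,x] ++ z.drop (i + ([x,q,x,q] : List B).length)) := by
      simp only [CoxeterSystem.wordProd_append, hprod]
    rw [this]
    have hle := cs.length_wordProd_le (z.take i ++ [q,x] ++ z.drop (i + ([x,q,x,q] : List B).length))
    have hlen2 : (z.take i ++ [q,x] ++ z.drop (i + ([x,q,x,q] : List B).length)).length = z.length - 2 := by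
      simp only [List.length_append, List.length_take, List.length_drop, List.length_cons,
        List.length_nil] at hb ⊢
      omega
    rw [hlen2] at hle
    exact hle
  unfold CoxeterSystem.IsReduced at hred
  simp only [List.length_cons, List.length_nil] at hb
  omega

/-- a word with two adjacent equal letters is not reduced. -/
lemma not_reduced_dup {z : List B} {i : ℕ} {b : B}
    (h0 : z[i]? = some b) (h1 : z[i+1]? = some b) : ¬ cs.IsReduced z := by
  intro hred
  have hb : i + ([b,b] : List B).length ≤ z.length := by
    obtain ⟨hlen, -⟩ := List.getElem?_eq_some_iff.1 h1
    simp only [List.length_cons, List.length_nil]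
    omega
  have hsp : z = z.take i ++ [b,b] ++ z.drop (i + ([b,b] : List B).length) := by
    apply selfsplice_of_getElem? [b,b] hb
    intro j hj
    simp only [List.length_cons, List.length_nil] at hj
    interval_cases j
    · simpa using h0
    · simpa using h1
  have hprod : cs.wordProd [b,b] = cs.wordProd ([] : List B) := by
    simp [CoxeterSystem.wordProd_cons, cs.simple_mul_simple_self]
  have hlong : cs.length (cs.wordProd z) ≤ z.length - 2 := by
    conv_lhs => rw [hsp]
    have : cs.wordProd (z.take i ++ [b,b] ++ z.drop (i + ([b,b] : List B).length))
        = cs.wordProd (z.take i ++ ([] : List B) ++ z.drop (i + ([b,b] : List B).length)) := by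
      simp only [CoxeterSystem.wordProd_append, hprod]
    rw [this]
    have hle := cs.length_wordProd_le (z.take i ++ ([] : List B) ++ z.drop (i + ([b,b] : List B).length))
    have hlen2 : (z.take i ++ ([] : List B) ++ z.drop (i + ([b,b] : List B).length)).length = z.length - 2 := by
      simp only [List.length_append, List.length_take, List.length_drop, List.length_cons,
        List.length_nil] at hb ⊢
      omega
    rw [hlen2] at hle
    exact hle
  unfold CoxeterSystem.IsReduced at hred
  simp only [List.length_cons, List.length_nil] at hb
  omega

/-- two adjacent (overlapping) patterns make a word non-reduced. -/
lemma not_reduced_adjPat {z : List B} {a : ℕ} {x q y r : B}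
    (h1 : Pat M z a x q) (h2 : Pat M z (a+1) y r) : ¬ cs.IsReduced z := by
  have e1 : y = q := by
    have := h2.s0
    rw [h1.s1] at this
    exact (Option.some_injective B this).symm
  have e2 : r = x := by
    have := h2.s1
    rw [show a+1+1 = a+2 from rfl, h1.s2] at this
    exact (Option.some_injective B this).symm
  have e3 : z[a+3]? = some q := by
    have := h2.s2
    rw [show a+1+2 = a+3 from rfl] at this
    rw [this, e1]
  exact not_reduced_xqxq M cs h1.h3 h1.s0 h1.s1 h1.s2 e3

/-! ### Paths of braid moves -/

def Pth (M : CoxeterMatrix B) (k : ℕ) (w : ℕ → List B) : Prop :=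
  ∀ t, t < k → ∃ p x q, Mv M (w t) (w (t+1)) p x q

lemma Pth.mono {M : CoxeterMatrix B} {k j : ℕ} {w : ℕ → List B} (h : Pth M k w) (hj : j ≤ k) :
    Pth M j w := fun t ht => h t (by omega)

lemma Pth.shift {M : CoxeterMatrix B} {k : ℕ} {w : ℕ → List B} (h : Pth M k w) (t0 : ℕ) :
    Pth M (k - t0) (fun i => w (t0 + i)) := by
  intro t ht
  have := h (t0 + t) (by omega)
  simpa [show t0 + t + 1 = t0 + (t+1) by omega] using this

lemma Pth.rev {M : CoxeterMatrix B} {k : ℕ} {w : ℕ → List B} (h : Pth M k w) :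
    Pth M k (fun i => w (k - i)) := by
  intro t ht
  obtain ⟨p, x, q, hm⟩ := h (k - (t+1)) (by omega)
  have he : k - (t+1) + 1 = k - t := by omega
  rw [he] at hm
  exact ⟨p, q, x, hm.symm⟩

lemma Pth.isReduced {k : ℕ} {w : ℕ → List B} (h : Pth M k w)
    (h0 : cs.IsReduced (w 0)) : ∀ t, t ≤ k → cs.IsReduced (w t) := by
  intro t
  induction t with
  | zero => intro _; exact h0
  | succ n ihn =>
    intro hn
    obtain ⟨p, x, q, hm⟩ := h n (by omega)
    exact (Mv.isReduced_iff M cs hm).2 (ihn (by omega))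

lemma Pth.length_eq {M : CoxeterMatrix B} {k : ℕ} {w : ℕ → List B} (h : Pth M k w) :
    ∀ t, t ≤ k → (w t).length = (w 0).length := by
  intro t
  induction t with
  | zero => intro _; rfl
  | succ n ihn =>
    intro hn
    obtain ⟨p, x, q, hm⟩ := h n (by omega)
    rw [hm.len, ihn (by omega)]

lemma Pth.snoc {M : CoxeterMatrix B} {m : ℕ} {v : ℕ → List B} (hv : Pth M m v) {z : List B}
    (hm : ∃ p x q, Mv M (v m) z p x q) :
    ∃ v', Pth M (m+1) v' ∧ v' 0 = v 0 ∧ v' (m+1) = z := by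
  refine ⟨fun i => if i ≤ m then v i else z, ?_, by simp, by simp⟩
  intro t ht
  by_cases h1 : t + 1 ≤ m
  · simpa [show t ≤ m by omega, h1] using hv t (by omega)
  · have ht' : t = m := by omega
    simpa [ht', show ¬ (m+1 ≤ m) by omega] using hm

lemma Pth.glue {M : CoxeterMatrix B} {m n : ℕ} {v u : ℕ → List B}
    (hv : Pth M m v) (hu : Pth M n u) (hvu : v m = u 0) :
    ∃ g, Pth M (m + n) g ∧ g 0 = v 0 ∧ g (m+n) = u n := by
  refine ⟨fun i => if i < m then v i else u (i - m), ?_, ?_, ?_⟩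
  · intro t ht
    by_cases h1 : t + 1 < m
    · simpa [show t < m by omega, h1] using hv t (by omega)
    · by_cases h2 : t < m
      · have ht' : t + 1 = m := by omega
        have := hv t (by omega)
        rw [ht', hvu] at this
        simpa [h2, h1, show m - m = 0 by omega, ht'] using this
      · have := hu (t - m) (by omega)
        simpa [h2, h1, show t + 1 - m = (t - m) + 1 by omega] using this
  · by_cases h : 0 < m
    · simp [h]
    · have hm0 : m = 0 := by omega
      subst hm0
      simp [hvu]
  · simp [show ¬ (m + n < m) by omega, show m + n - m = n by omega]

lemma Mv.p_unique {M : CoxeterMatrix B} {z z' : List B} {p p' x q x' q'}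
    (h : Mv M z z' p x q) (h' : Mv M z z' p' x' q') : p = p' := by
  have hne : z'[p]? ≠ z[p]? := by
    rw [h.t0, h.s0]
    intro hc
    exact ne_of_M3 M h.h3 (Option.some_injective B hc).symm
  have hne' : z'[p']? ≠ z[p']? := by
    rw [h'.t0, h'.s0]
    intro hc
    exact ne_of_M3 M h'.h3 (Option.some_injective B hc).symm
  have c1 : p' ≤ p ∧ p ≤ p' + 2 := by
    by_contra hc
    exact hne (h'.out p (by omega) (by omega) (by omega))
  have c2 : p ≤ p' ∧ p' ≤ p + 2 := by
    by_contra hc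
    exact hne' (h.out p' (by omega) (by omega) (by omega))
  omega

lemma Mv.dropN {M : CoxeterMatrix B} {z z' : List B} {p x q} (h : Mv M z z' p x q)
    (d : ℕ) (hd : d ≤ p) : Mv M (z.drop d) (z'.drop d) (p - d) x q := by
  have e : ∀ j, d + (p - d + j) = p + j := by intro j; omega
  refine ⟨h.h3, by simp [h.len], ?_, ?_, ?_, ?_, ?_, ?_, ?_⟩
  · rw [List.getElem?_drop]
    simpa [show d + (p - d) = p by omega] using h.s0
  · rw [List.getElem?_drop, e 1]; exact h.s1
  · rw [List.getElem?_drop, e 2]; exact h.s2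
  · rw [List.getElem?_drop]
    simpa [show d + (p - d) = p by omega] using h.t0
  · rw [List.getElem?_drop, e 1]; exact h.t1
  · rw [List.getElem?_drop, e 2]; exact h.t2
  · intro i h1 h2 h3
    rw [List.getElem?_drop, List.getElem?_drop]
    exact h.out (d + i) (by omega) (by omega) (by omega)

lemma Mv.appendLeft {M : CoxeterMatrix B} {z z' : List B} {p x q} (h : Mv M z z' p x q)
    (u : List B) : Mv M (u ++ z) (u ++ z') (u.length + p) x q := by
  have key : ∀ (a : List B) (j : ℕ), (u ++ a)[u.length + j]? = a[j]? := by
    intro a j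
    rw [List.getElem?_append_right (by omega)]
    congr 1; omega
  refine ⟨h.h3, by simp [h.len], ?_, ?_, ?_, ?_, ?_, ?_, ?_⟩
  · rw [key]; exact h.s0
  · rw [show u.length + p + 1 = u.length + (p+1) by omega, key]; exact h.s1
  · rw [show u.length + p + 2 = u.length + (p+2) by omega, key]; exact h.s2
  · rw [key]; exact h.t0
  · rw [show u.length + p + 1 = u.length + (p+1) by omega, key]; exact h.t1
  · rw [show u.length + p + 2 = u.length + (p+2) by omega, key]; exact h.t2
  · intro i h1 h2 h3
    by_cases hi : i < u.length
    · rw [List.getElem?_append_left hi, List.getElem?_append_left hi]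
    · rw [List.getElem?_append_right (by omega), List.getElem?_append_right (by omega)]
      exact h.out (i - u.length) (by omega) (by omega) (by omega)

/-! ### S1 : no two adjacent shadow centers -/

theorem S1 : ∀ k (w : ℕ → List B), Pth M k w → cs.IsReduced (w 0) →
    ∀ a x q y r, Pat M (w 0) a x q → Pat M (w k) (a+1) y r → False := by
  intro k
  induction k using Nat.strong_induction_on with
  | _ k IH =>
  intro w hw hred a x q y r hu hv
  rcases Nat.eq_zero_or_pos k with hk0 | hkpos
  · subst hk0; exact not_reduced_adjPat M cs hu hv hred
  obtain ⟨p, s, t, hm⟩ := hw 0 hkpos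
  have hred1 : cs.IsReduced (w 1) := Pth.isReduced M cs hw hred 1 (by omega)
  have hcase : (p + 3 ≤ a ∨ a + 3 ≤ p) ∨ p + 2 = a ∨ p + 1 = a ∨ p = a ∨ p = a+1 ∨ p = a+2 := by
    omega
  rcases hcase with hfar | hpe | hpe | hpe | hpe | hpe
  · -- far: base pattern survives
    have hu1 : Pat M (w 1) a x q :=
      ⟨hu.h3, by rw [hm.out a (by omega) (by omega) (by omega)]; exact hu.s0,
        by rw [hm.out (a+1) (by omega) (by omega) (by omega)]; exact hu.s1,
        by rw [hm.out (a+2) (by omega) (by omega) (by omega)]; exact hu.s2⟩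
    exact IH (k-1) (by omega) (fun i => w (1+i)) (hw.shift 1) (by simpa using hred1)
      a x q y r hu1 (by simpa [show 1 + (k-1) = k by omega] using hv)
  · -- p+2 = a : THE HARD CASE
    have hmid : ∀ t' p' s' t'', t' < k → Mv M (w t') (w (t'+1)) p' s' t'' →
        p' + 2 ≤ a ∨ a + 3 ≤ p' := by
      intro t' p' s' t'' ht' hm'
      by_contra hcon
      have hc4 : p' + 1 = a ∨ p' = a ∨ p' = a + 1 ∨ p' = a + 2 := by omega
      rcases hc4 with he | he | he | he
      · exact IH t' (by omega) (fun i => w (t' - i)) ((hw.mono (le_of_lt ht')).rev)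
          (by simpa using Pth.isReduced M cs hw hred t' (by omega))
          p' s' t'' x q (by simpa using hm'.pat)
          (by simpa [he, show t' - t' = 0 by omega] using hu)
      · rcases Nat.eq_zero_or_pos t' with h0 | hpos
        · subst h0
          have := hm.p_unique hm'
          omega
        · exact IH (k - t') (by omega) (fun i => w (t' + i)) (hw.shift t')
            (by simpa using Pth.isReduced M cs hw hred t' (by omega))
            a s' t'' y r (by simpa [he] using hm'.pat)
            (by simpa [show t' + (k - t') = k by omega] using hv)
      · exact IH t' (by omega) w (hw.mono (by omega)) hred a x q s' t'' hu
          (by simpa [he] using hm'.pat)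
      · rcases Nat.eq_zero_or_pos t' with h0 | hpos
        · subst h0
          have := hm.p_unique hm'
          omega
        · exact IH (k - t') (by omega) (fun i => w (k - i)) (hw.rev.mono (by omega))
            (by simpa using Pth.isReduced M cs hw hred k le_rfl)
            (a+1) y r s' t'' (by simpa using hv)
            (by simpa [show k - (k - t') = t' by omega, he] using hm'.pat)
    have hconst : ∀ t', t' ≤ k → (w t')[a+1]? = some q ∧ (w t')[a+2]? = some x := by
      intro t'
      induction t' with
      | zero => intro _; exact ⟨hu.s1, hu.s2⟩
      | succ n ihn =>
        intro hn
        obtain ⟨p', s', t'', hm'⟩ := hw n (by omega)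
        have hd := hmid n p' s' t'' (by omega) hm'
        obtain ⟨e1, e2⟩ := ihn (by omega)
        exact ⟨by rw [hm'.out (a+1) (by omega) (by omega) (by omega)]; exact e1,
               by rw [hm'.out (a+2) (by omega) (by omega) (by omega)]; exact e2⟩
    have hreach : ∀ t', t' ≤ k → ∃ m v, Pth M m v ∧ v 0 = w 0 ∧
        v m = (w 0).take (a+3) ++ (w t').drop (a+3) := by
      intro t'
      induction t' with
      | zero => exact fun _ => ⟨0, fun _ => w 0, fun t ht => absurd ht (by omega), rfl,
          by rw [List.take_append_drop]⟩
      | succ n ihn =>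
        intro hn
        obtain ⟨m, v, hvp, hv0, hvm⟩ := ihn (by omega)
        obtain ⟨p', s', t'', hm'⟩ := hw n (by omega)
        rcases hmid n p' s' t'' (by omega) hm' with hleft | hright
        · refine ⟨m, v, hvp, hv0, ?_⟩
          rw [hvm]
          congr 1
          apply List.ext_getElem?
          intro i
          rw [List.getElem?_drop, List.getElem?_drop]
          exact (hm'.out (a+3+i) (by omega) (by omega) (by omega)).symm
        · have hdropmv := hm'.dropN (a+3) (by omega)
          have happ := hdropmv.appendLeft ((w 0).take (a+3))
          obtain ⟨v', hv'p, hv'0, hv'm⟩ := hvp.snoc ⟨_, _, _, by rw [hvm]; exact happ⟩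
          exact ⟨m+1, v', hv'p, by rw [hv'0, hv0], by rw [hv'm]⟩
    obtain ⟨m, v, hvp, hv0, hvm⟩ := hreach k le_rfl
    have hZred : cs.IsReduced (v m) := Pth.isReduced M cs hvp (by rw [hv0]; exact hred) m le_rfl
    have hlen : ((w 0).take (a+3)).length = a + 3 := by
      rw [List.length_take]
      have := hu.bound
      omega
    have g0 : (v m)[a]? = some x := by
      rw [hvm, List.getElem?_append_left (by omega : a < ((w 0).take (a+3)).length)]
      rw [List.getElem?_take_of_lt (by omega : a < a+3)]
      exact hu.s0
    have g1 : (v m)[a+1]? = some q := by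
      rw [hvm, List.getElem?_append_left (by omega : a+1 < ((w 0).take (a+3)).length)]
      rw [List.getElem?_take_of_lt (by omega : a+1 < a+3)]
      exact hu.s1
    have g2 : (v m)[a+2]? = some x := by
      rw [hvm, List.getElem?_append_left (by omega : a+2 < ((w 0).take (a+3)).length)]
      rw [List.getElem?_take_of_lt (by omega : a+2 < a+3)]
      exact hu.s2
    have hyq : y = q := by
      have h1 := hv.s0
      have h2 := (hconst k le_rfl).1
      rw [h2] at h1
      exact (Option.some_injective B h1).symm
    have g3 : (v m)[a+3]? = some q := by
      rw [hvm, List.getElem?_append_right (by omega : ((w 0).take (a+3)).length ≤ a+3)]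
      rw [hlen, show a+3 - (a+3) = 0 by omega, List.getElem?_drop]
      have := hv.s2
      rw [show a+3+0 = (a+1)+2 by omega]
      rw [this, hyq]
    exact not_reduced_xqxq M cs hu.h3 g0 g1 g2 g3 hZred
  · -- p+1 = a
    exact not_reduced_adjPat M cs hm.pat (show Pat M (w 0) (p+1) x q from hpe ▸ hu) hred
  · -- p = a
    subst hpe
    exact IH (k-1) (by omega) (fun i => w (1+i)) (hw.shift 1) (by simpa using hred1)
      p t s y r hm.pat' (by simpa [show 1 + (k-1) = k by omega] using hv)
  · -- p = a+1
    exact not_reduced_adjPat M cs hu (show Pat M (w 0) (a+1) s t from hpe ▸ hm.pat) hred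
  · -- p = a+2
    subst hpe
    exact IH (k-1) (by omega) (fun i => w (k - i)) (hw.rev.mono (by omega))
      (by simpa using Pth.isReduced M cs hw hred k le_rfl)
      (a+1) y r t s (by simpa using hv)
      (by simpa [show k - (k-1) = 1 by omega] using hm.pat')

/-! ### The joint induction -/

theorem JX (hTF : ∀ s t u : B, ¬ ((M s t = 0 ∨ 3 ≤ M s t) ∧ (M t u = 0 ∨ 3 ≤ M t u)
      ∧ (M s u = 0 ∨ 3 ≤ M s u))) :
    ∀ k (w : ℕ → List B), Pth M k w → cs.IsReduced (w 0) →
    ∀ a x q, Pat M (w 0) a x q →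
      ((∀ h, (w k)[a+1]? = some h → h = x ∨ h = q) ∧
       (∀ f, (w k)[a+1]? = some q → (w k)[a+2]? = some f → M f q = 3 → f = x) ∧
       (∀ f, (w k)[a+1]? = some x → (w k)[a+2]? = some f → M f x = 3 → f = q) ∧
       (∀ y r, Pat M (w k) (a+2) y r → y = x ∨ y = q ∨ r = x ∨ r = q) ∧
       (∀ f g, (w k)[a+2]? = some f → f ≠ x → f ≠ q → (w k)[a+3]? = some g →
          M f g = 3 → g = x ∨ g = q) ∧
       (∀ f, (w k)[a+2]? = some f → f ≠ x → f ≠ q →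
          ∃ m v, Pth M m v ∧ v 0 = w 0 ∧ ∃ y' r', Pat M (v m) (a+2) y' r')) := by
  have triangle : ∀ s t u : B, M s t = 3 → M t u = 3 → M s u = 3 → False := by
    intro s t u h1 h2 h3
    exact hTF s t u ⟨Or.inr (by omega), Or.inr (by omega), Or.inr (by omega)⟩
  intro k
  induction k using Nat.strong_induction_on with
  | _ k IH =>
  intro w hw hred a x q hu
  rcases Nat.eq_zero_or_pos k with hk0 | hkpos
  · subst hk0
    have hxq : x ≠ q := ne_of_M3 M hu.h3
    refine ⟨?_, ?_, ?_, ?_, ?_, ?_⟩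
    · intro h hh
      rw [hu.s1] at hh
      exact Or.inr (Option.some_injective B hh).symm
    · intro f _ hf _
      rw [hu.s2] at hf
      exact (Option.some_injective B hf).symm
    · intro f hx' _ _
      rw [hu.s1] at hx'
      exact absurd (Option.some_injective B hx') hxq.symm
    · intro y r hp
      have h0 := hp.s0
      rw [hu.s2] at h0
      exact Or.inl (Option.some_injective B h0).symm
    · intro f g hf hfx _ _ _
      rw [hu.s2] at hf
      exact absurd (Option.some_injective B hf).symm hfx
    · intro f hf hfx _
      rw [hu.s2] at hf
      exact absurd (Option.some_injective B hf).symm hfx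
  -- k ≥ 1 : analyze the last move
  obtain ⟨p, s, t, hm0⟩ := hw (k-1) (by omega)
  rw [show k-1+1 = k by omega] at hm0
  have hredk1 : cs.IsReduced (w (k-1)) := Pth.isReduced M cs hw hred (k-1) (by omega)
  have hredk : cs.IsReduced (w k) := Pth.isReduced M cs hw hred k le_rfl
  obtain ⟨ihTL, ihS2, ihS2', ihS3, ihS4, ihS6⟩ :=
    IH (k-1) (by omega) w (hw.mono (by omega)) hred a x q hu
  have killR : ∀ s' t', Pat M (w (k-1)) (a+1) s' t' → False := fun s' t' hp =>
    S1 M cs (k-1) w (hw.mono (by omega)) hred a x q s' t' hu hp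
  have killL : ∀ p' s' t', p'+1 = a → Pat M (w (k-1)) p' s' t' → False := by
    intro p' s' t' he hp
    exact S1 M cs (k-1) (fun i => w (k-1-i)) ((hw.mono (by omega)).rev)
      (by simpa using hredk1) p' s' t' x q (by simpa using hp)
      (by simpa [he, show k-1-(k-1) = 0 by omega] using hu)
  have killRR : ∀ y' r' s' t', Pat M (w k) (a+2) y' r' → Pat M (w (k-1)) (a+3) s' t' → False := by
    intro y' r' s' t' hp1 hp2
    refine S1 M cs 1 (fun i => w (k-i)) (hw.rev.mono (by omega)) (by simpa using hredk)
      (a+2) y' r' s' t' (by simpa using hp1) (by simpa [show k-1 = k-1 from rfl] using hp2)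
  refine ⟨?_, ?_, ?_, ?_, ?_, ?_⟩
  · -- TLpos
    intro h hh
    have hcase : (p + 2 ≤ a ∨ a + 2 ≤ p) ∨ p + 1 = a ∨ p = a ∨ p = a + 1 := by omega
    rcases hcase with hfar | he | he | he
    · exact ihTL h (by rw [← hm0.out (a+1) (by omega) (by omega) (by omega)]; exact hh)
    · exact (killL p s t he hm0.pat).elim
    · subst he
      have hsh : s = h := by
        rw [hm0.t1] at hh
        exact Option.some_injective B hh
      rw [← hsh]
      rcases ihTL t hm0.s1 with htx | htq
      · exact Or.inr (ihS2' s (by rw [← htx]; exact hm0.s1) hm0.s2 (by rw [← htx]; exact hm0.h3))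
      · exact Or.inl (ihS2 s (by rw [← htq]; exact hm0.s1) hm0.s2 (by rw [← htq]; exact hm0.h3))
    · exact (killR s t (by rw [← he]; exact hm0.pat)).elim
  · -- S2
    intro f hq2 hf hMfq
    have hcase : (p + 2 ≤ a ∨ a + 3 ≤ p) ∨ p + 1 = a ∨ p = a ∨ p = a + 1 ∨ p = a + 2 := by omega
    rcases hcase with hfar | he | he | he | he
    · refine ihS2 f ?_ ?_ hMfq
      · rw [← hm0.out (a+1) (by omega) (by omega) (by omega)]; exact hq2
      · rw [← hm0.out (a+2) (by omega) (by omega) (by omega)]; exact hf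
    · exact (killL p s t he hm0.pat).elim
    · subst he
      have hsq : s = q := by
        rw [hm0.t1] at hq2
        exact Option.some_injective B hq2
      have hft : f = t := by
        rw [hm0.t2] at hf
        exact (Option.some_injective B hf).symm
      rcases ihTL t hm0.s1 with htx | htq
      · rw [hft, htx]
      · exfalso
        have hqq : M q q = 3 := by
          have h := hm0.h3
          rw [hsq, htq] at h
          exact h
        rw [M.diagonal] at hqq
        omega
    · exact (killR s t (by rw [← he]; exact hm0.pat)).elim
    · subst he
      have hft : f = t := by
        rw [hm0.t0] at hf
        exact (Option.some_injective B hf).symm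
      have hq1 : (w (k-1))[a+1]? = some q := by
        rw [← hm0.out (a+1) (by omega) (by omega) (by omega)]; exact hq2
      rcases ihS3 s t hm0.pat with hsx | hsq | htx | htq
      · exact (triangle x t q (by rw [← hsx]; exact hm0.h3) (by rw [← hft]; exact hMfq)
          hu.h3).elim
      · exact ((not_reduced_dup M cs hq1 (by rw [← hsq]; exact hm0.s0)) hredk1).elim
      · rw [hft, htx]
      · exact ((not_reduced_dup M cs hq2 (by rw [← htq, ← hft]; exact hf)) hredk).elim
  · -- S2'
    intro f hx2 hf hMfx
    have hcase : (p + 2 ≤ a ∨ a + 3 ≤ p) ∨ p + 1 = a ∨ p = a ∨ p = a + 1 ∨ p = a + 2 := by omega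
    rcases hcase with hfar | he | he | he | he
    · refine ihS2' f ?_ ?_ hMfx
      · rw [← hm0.out (a+1) (by omega) (by omega) (by omega)]; exact hx2
      · rw [← hm0.out (a+2) (by omega) (by omega) (by omega)]; exact hf
    · exact (killL p s t he hm0.pat).elim
    · subst he
      have hsx : s = x := by
        rw [hm0.t1] at hx2
        exact Option.some_injective B hx2
      have hft : f = t := by
        rw [hm0.t2] at hf
        exact (Option.some_injective B hf).symm
      rcases ihTL t hm0.s1 with htx | htq
      · exfalso
        have hxx : M x x = 3 := by
          have h := hm0.h3
          rw [hsx, htx] at h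
          exact h
        rw [M.diagonal] at hxx
        omega
      · rw [hft, htq]
    · exact (killR s t (by rw [← he]; exact hm0.pat)).elim
    · subst he
      have hft : f = t := by
        rw [hm0.t0] at hf
        exact (Option.some_injective B hf).symm
      have hx1 : (w (k-1))[a+1]? = some x := by
        rw [← hm0.out (a+1) (by omega) (by omega) (by omega)]; exact hx2
      rcases ihS3 s t hm0.pat with hsx | hsq | htx | htq
      · exact ((not_reduced_dup M cs hx1 (by rw [← hsx]; exact hm0.s0)) hredk1).elim
      · exact (triangle q t x (by rw [← hsq]; exact hm0.h3) (by rw [← hft]; exact hMfx)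
          (by rw [M.symmetric q x]; exact hu.h3)).elim
      · exfalso
        rw [hft, htx] at hMfx
        rw [M.diagonal] at hMfx
        omega
      · rw [hft, htq]
  · -- S3
    intro y r hpk
    have hcase : (p + 2 ≤ a + 1 ∨ a + 5 ≤ p) ∨ p = a ∨ p = a + 1 ∨ p = a + 2 ∨ p = a + 3
        ∨ p = a + 4 := by omega
    rcases hcase with hfar | he | he | he | he | he
    · refine ihS3 y r ⟨hpk.h3, ?_, ?_, ?_⟩
      · rw [← hm0.out (a+2) (by omega) (by omega) (by omega)]
        exact hpk.s0
      · rw [← hm0.out (a+3) (by omega) (by omega) (by omega)]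
        exact hpk.s1
      · rw [← hm0.out (a+4) (by omega) (by omega) (by omega)]
        exact hpk.s2
    · subst he
      have hyt : t = y := by
        have := hpk.s0
        rw [hm0.t2] at this
        exact Option.some_injective B this
      rcases ihTL t hm0.s1 with htx | htq
      · exact Or.inl (by rw [← hyt, htx])
      · exact Or.inr (Or.inl (by rw [← hyt, htq]))
    · exact (killR s t (by rw [← he]; exact hm0.pat)).elim
    · subst he
      have hyt : t = y := by
        have := hpk.s0
        rw [hm0.t0] at this
        exact Option.some_injective B this
      have hrs : s = r := by
        have := hpk.s1
        rw [hm0.t1] at this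
        exact Option.some_injective B this
      rcases ihS3 s t hm0.pat with h1 | h1 | h1 | h1
      · exact Or.inr (Or.inr (Or.inl (by rw [← hrs, h1])))
      · exact Or.inr (Or.inr (Or.inr (by rw [← hrs, h1])))
      · exact Or.inl (by rw [← hyt, h1])
      · exact Or.inr (Or.inl (by rw [← hyt, h1]))
    · exact (killRR y r s t hpk (by rw [← he]; exact hm0.pat)).elim
    · subst he
      have hyw : (w (k-1))[a+2]? = some y := by
        rw [← hm0.out (a+2) (by omega) (by omega) (by omega)]
        exact hpk.s0
      have hrw : (w (k-1))[a+3]? = some r := by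
        rw [← hm0.out (a+3) (by omega) (by omega) (by omega)]
        exact hpk.s1
      by_cases hyx : y = x
      · exact Or.inl hyx
      by_cases hyq : y = q
      · exact Or.inr (Or.inl hyq)
      rcases ihS4 y r hyw hyx hyq hrw hpk.h3 with h1 | h1
      · exact Or.inr (Or.inr (Or.inl h1))
      · exact Or.inr (Or.inr (Or.inr h1))
  · -- S4
    intro f g hf2 hfx hfq hg3 hMfg
    have hcase : (p + 2 ≤ a + 1 ∨ a + 4 ≤ p) ∨ p = a ∨ p = a + 1 ∨ p = a + 2 ∨ p = a + 3 := by
      omega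
    rcases hcase with hfar | he | he | he | he
    · refine ihS4 f g ?_ hfx hfq ?_ hMfg
      · rw [← hm0.out (a+2) (by omega) (by omega) (by omega)]; exact hf2
      · rw [← hm0.out (a+3) (by omega) (by omega) (by omega)]; exact hg3
    · subst he
      exfalso
      have hft : t = f := by
        have := hf2
        rw [hm0.t2] at this
        exact Option.some_injective B this
      rcases ihTL t hm0.s1 with htx | htq
      · exact hfx (by rw [← hft, htx])
      · exact hfq (by rw [← hft, htq])
    · exact (killR s t (by rw [← he]; exact hm0.pat)).elim
    · subst he
      have hft : t = f := by
        have := hf2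
        rw [hm0.t0] at this
        exact Option.some_injective B this
      have hgs : s = g := by
        have := hg3
        rw [hm0.t1] at this
        exact Option.some_injective B this
      rcases ihS3 s t hm0.pat with h1 | h1 | h1 | h1
      · exact Or.inl (by rw [← hgs, h1])
      · exact Or.inr (by rw [← hgs, h1])
      · exact absurd (by rw [← hft, h1]) hfx
      · exact absurd (by rw [← hft, h1]) hfq
    · subst he
      exfalso
      have hf1 : (w (k-1))[a+2]? = some f := by
        rw [← hm0.out (a+2) (by omega) (by omega) (by omega)]
        exact hf2
      obtain ⟨m, v, hvp, hv0, y', r', hpv⟩ := ihS6 f hf1 hfx hfq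
      -- path from (v m) back to w 0 then forward to w (k-1)
      obtain ⟨gl, hglp, hgl0, hglend⟩ := Pth.glue (hvp.rev) (hw.mono (by omega : k-1 ≤ k))
        (by simpa [show m - m = 0 by omega] using hv0)
      refine S1 M cs (m + (k-1)) gl hglp ?_ (a+2) y' r' s t ?_ ?_
      · rw [hgl0]
        simpa using Pth.isReduced M cs hvp (by rw [hv0]; exact hred) m le_rfl
      · rw [hgl0]
        simpa using hpv
      · rw [hglend]
        exact hm0.pat
  · -- S6
    intro f hf2 hfx hfq
    have hcase : (p + 2 ≤ a + 1 ∨ a + 3 ≤ p) ∨ p = a ∨ p = a + 1 ∨ p = a + 2 := by omega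
    rcases hcase with hfar | he | he | he
    · refine ihS6 f ?_ hfx hfq
      rw [← hm0.out (a+2) (by omega) (by omega) (by omega)]; exact hf2
    · subst he
      exfalso
      have hft : t = f := by
        have := hf2
        rw [hm0.t2] at this
        exact Option.some_injective B this
      rcases ihTL t hm0.s1 with htx | htq
      · exact hfx (by rw [← hft, htx])
      · exact hfq (by rw [← hft, htq])
    · exact (killR s t (by rw [← he]; exact hm0.pat)).elim
    · subst he
      exact ⟨k-1, w, hw.mono (by omega), rfl, s, t, hm0.pat⟩

/-! ### Wrappers -/

lemma braidEquiv_exists_path {u z : List B} (h : BraidEquiv M u z) :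
    ∃ k w, Pth M k w ∧ w 0 = u ∧ w k = z := by
  induction h with
  | refl => exact ⟨0, fun _ => u, fun t ht => absurd ht (by omega), rfl, rfl⟩
  | tail hab hbc ih =>
    obtain ⟨k, w, hw, h0, hk⟩ := ih
    obtain ⟨p, x, q, hmv⟩ := (mv_iff_braidMove M).1 hbc
    obtain ⟨v', hv'p, hv'0, hv'k⟩ := hw.snoc ⟨p, x, q, by rw [hk]; exact hmv⟩
    exact ⟨k+1, v', hv'p, by rw [hv'0, h0], hv'k⟩

lemma braidEquiv_symm {u z : List B} (h : BraidEquiv M u z) : BraidEquiv M z u := by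
  refine @Std.Symm.symm _ _ (@Relation.ReflTransGen.stdSymm _ (BraidMove M) ⟨?_⟩) _ _ h
  intro p r hm
  obtain ⟨pp, x, q, hmv⟩ := (mv_iff_braidMove M).1 hm
  exact (mv_iff_braidMove M).2 ⟨pp, q, x, hmv.symm⟩

lemma braidEquiv_isReduced_s17 {u z : List B} (h : BraidEquiv M u z) (hu : cs.IsReduced u) :
    cs.IsReduced z := by
  obtain ⟨k, w, hw, h0, hk⟩ := braidEquiv_exists_path M h
  rw [← hk]
  exact Pth.isReduced M cs hw (by rw [h0]; exact hu) k le_rfl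

lemma braidEquiv_length {u z : List B} (h : BraidEquiv M u z) : z.length = u.length := by
  obtain ⟨k, w, hw, h0, hk⟩ := braidEquiv_exists_path M h
  rw [← hk, ← h0]
  exact hw.length_eq k le_rfl

lemma shadowCenter_pat {z : List B} {c : ℕ} (h : ShadowCenter M z c) :
    2 ≤ c ∧ ∃ s t, Pat M z (c-2) s t := by
  obtain ⟨hc2, s, t, h3, hsp⟩ := h
  refine ⟨hc2, s, t, h3, ?_, ?_, ?_⟩
  · have := selfsplice_getElem? (z := z) (p := c-2) [s,t,s] (by simp)
      (by rw [show (c-2) + ([s,t,s] : List B).length = c + 1 by simp; omega]; exact hsp)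
      (show 0 < ([s,t,s] : List B).length by simp)
    simpa using this
  · have := selfsplice_getElem? (z := z) (p := c-2) [s,t,s] (by simp)
      (by rw [show (c-2) + ([s,t,s] : List B).length = c + 1 by simp; omega]; exact hsp)
      (show 1 < ([s,t,s] : List B).length by simp)
    simpa using this
  · have := selfsplice_getElem? (z := z) (p := c-2) [s,t,s] (by simp)
      (by rw [show (c-2) + ([s,t,s] : List B).length = c + 1 by simp; omega]; exact hsp)
      (show 2 < ([s,t,s] : List B).length by simp)
    simpa using this

/-- The two-letter lemma at a class center. -/
lemma center_letters
    (hTF : ∀ s t u : B, ¬ ((M s t = 0 ∨ 3 ≤ M s t) ∧ (M t u = 0 ∨ 3 ≤ M t u)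
      ∧ (M s u = 0 ∨ 3 ≤ M s u)))
    {α : List B} (hα : cs.IsReduced α) {c : ℕ} (hc : c ∈ classCenters M α) :
    ∃ x q : B, ∀ z, BraidEquiv M α z → z[c-1]? = some x ∨ z[c-1]? = some q := by
  obtain ⟨β', hβ', hsc⟩ := hc
  obtain ⟨hc2, x, q, hpat⟩ := shadowCenter_pat M hsc
  have hβred : cs.IsReduced β' := braidEquiv_isReduced_s17 M cs hβ' hα
  refine ⟨x, q, fun z hz => ?_⟩
  have hzred : cs.IsReduced z := braidEquiv_isReduced_s17 M cs hz hα
  have hβz : BraidEquiv M β' z := Relation.ReflTransGen.trans (braidEquiv_symm M hβ') hz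
  obtain ⟨k, w, hw, h0, hk⟩ := braidEquiv_exists_path M hβz
  have hTL := (JX M cs hTF k w hw (by rw [h0]; exact hβred) (c-2) x q
      (by rw [h0]; exact hpat)).1
  have hlt : c - 1 < z.length := by
    have hb := hpat.bound
    have hlen : z.length = β'.length := braidEquiv_length M hβz
    omega
  obtain ⟨b, hb⟩ : ∃ b, z[c-1]? = some b := ⟨z[c-1]'hlt, by simp⟩
  have : (w k)[(c-2)+1]? = some b := by
    rw [hk, show (c-2)+1 = c-1 by omega]
    exact hb
  rcases hTL b this with hbx | hbq
  · exact Or.inl (by rw [hb, hbx])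
  · exact Or.inr (by rw [hb, hbq])

lemma classCenters_finite {α : List B} : (classCenters M α).Finite := by
  apply Set.Finite.subset (Set.finite_Iic α.length)
  rintro c ⟨β', hβ', hsc⟩
  obtain ⟨hc2, x, q, hpat⟩ := shadowCenter_pat M hsc
  have hb := hpat.bound
  have hlen : β'.length = α.length := braidEquiv_length M hβ'
  simp only [Set.mem_Iic]
  omega

lemma nthCenter_mem {α : List B} {i : ℕ} (h1 : 1 ≤ i) (h2 : i ≤ braidDim M α) :
    nthCenter M α i ∈ classCenters M α := by
  have hfin : (setOf (· ∈ classCenters M α)).Finite := by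
    show (classCenters M α).Finite
    exact classCenters_finite M
  have hcard : (classCenters M α).ncard = hfin.toFinset.card := by
    rw [Set.ncard_eq_toFinset_card _ (by rw [← Set.setOf_mem_eq (s := classCenters M α)]; exact hfin)]; rfl
  have : i - 1 < hfin.toFinset.card := by
    unfold braidDim at h2
    omega
  exact Nat.nth_mem_of_lt_card hfin this


end TwoLetterDevelopment

theorem sigbarPair_triple_inter_eq_maj
    {B W : Type*} [Group W] (M : CoxeterMatrix B) (cs : CoxeterSystem M W)
    (hM : TypeLambda M) (α β γ : List B)
    (hα : cs.IsReduced α) (hβ : cs.IsReduced β) (hγ : cs.IsReduced γ)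
    (hβe : BraidEquiv M α β) (hγe : BraidEquiv M α γ) :
    sigbarPair M α α β ∩ sigbarPair M α β γ ∩ sigbarPair M α γ α =
      {x : braidClass M α | ∀ i : ℕ, 1 ≤ i → i ≤ braidDim M α →
        sig M α x.1 i = maj M α β γ i} := by
  have hTF : ∀ s t u : B, ¬ ((M s t = 0 ∨ 3 ≤ M s t) ∧ (M t u = 0 ∨ 3 ≤ M t u)
      ∧ (M s u = 0 ∨ 3 ≤ M s u)) := fun s t u h => hM.2 s t u h
  have h2l : ∀ i : ℕ, 1 ≤ i → i ≤ braidDim M α →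
      ∃ x q : B, ∀ z, BraidEquiv M α z → sig M α z i = some x ∨ sig M α z i = some q := by
    intro i hi1 hi2
    have hc := nthCenter_mem M hi1 hi2
    obtain ⟨x, q, hxq⟩ := center_letters M cs hTF hα hc
    exact ⟨x, q, fun z hz => hxq z hz⟩
  have npd : ∀ i : ℕ, 1 ≤ i → i ≤ braidDim M α →
      sig M α α i = sig M α β i ∨ sig M α β i = sig M α γ i ∨
        sig M α γ i = sig M α α i := by
    intro i hi1 hi2
    obtain ⟨x, q, hxq⟩ := h2l i hi1 hi2
    have ha := hxq α Relation.ReflTransGen.refl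
    have hb := hxq β hβe
    have hc := hxq γ hγe
    rcases ha with h | h <;> rcases hb with h' | h' <;> rcases hc with h'' | h''
    · exact Or.inl (h.trans h'.symm)
    · exact Or.inl (h.trans h'.symm)
    · exact Or.inr (Or.inr (h''.trans h.symm))
    · exact Or.inr (Or.inl (h'.trans h''.symm))
    · exact Or.inr (Or.inl (h'.trans h''.symm))
    · exact Or.inr (Or.inr (h''.trans h.symm))
    · exact Or.inl (h.trans h'.symm)
    · exact Or.inl (h.trans h'.symm)
  ext z
  obtain ⟨z, hz⟩ := z
  simp only [Set.mem_inter_iff, Set.mem_setOf_eq, sigbarPair, maj]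
  constructor
  · rintro ⟨⟨hAB, hBC⟩, hCA⟩ i hi1 hi2
    by_cases e1 : sig M α α i = sig M α β i
    · rw [if_pos (Or.inl e1)]
      exact hAB i hi1 hi2 e1
    · by_cases e2 : sig M α α i = sig M α γ i
      · rw [if_pos (Or.inr e2)]
        have hh := hCA i hi1 hi2 e2.symm
        rw [hh, ← e2]
      · rw [if_neg (by tauto)]
        have e3 : sig M α β i = sig M α γ i := by
          rcases npd i hi1 hi2 with h | h | h
          · exact absurd h e1
          · exact h
          · exact absurd h.symm e2
        exact hBC i hi1 hi2 e3
  · intro hmaj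
    refine ⟨⟨?_, ?_⟩, ?_⟩ <;> intro i hi1 hi2 heq
    · have hh := hmaj i hi1 hi2
      rw [if_pos (Or.inl heq)] at hh
      exact hh
    · have hh := hmaj i hi1 hi2
      by_cases e1 : sig M α α i = sig M α β i
      · rw [if_pos (Or.inl e1)] at hh
        rw [hh, e1]
      · have e2 : ¬ (sig M α α i = sig M α γ i) := by
          intro e2
          exact e1 (e2.trans heq.symm)
        rw [if_neg (by tauto)] at hh
        exact hh
    · have hh := hmaj i hi1 hi2
      rw [if_pos (Or.inr heq.symm)] at hh
      rw [hh, heq]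

end Braid
end
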